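/- Fix: positive integers K and L; a nonempty finite collection I of nonempty subsets of {1,...,K}; for each S ∈ I a positive integer n_S; reals 0 < D_1 < D_2 < ... < D_L; for each k ∈ {1,...,K} an integer r_k ∈ {1,...,L}; a nonnegative integer Δ; positive reals B, T, n₀; positive reals P_1,...,P_K; a real β ≥ 1; a nonempty finite set Ω with q : Ω → ℝ satisfying q(ω) ≥ 0 for all ω and Σ_{ω∈Ω} q(ω) = 1; and for each ω ∈ Ω and k ∈ {1,...,K} a positive real h_k(ω). Consider Problem (w,r): minimize F(x,y,t,p) := Σ_{ω∈Ω} q(ω) Σ_{S∈I} Σ_{l=1}^L t_{ω,S,l}·p_{ω,S,l} + β Σ_{S∈I} Σ_{k∈S} n_S·P_k·T·(Σ_{l=1}^L l·y_{S,k,l} − x_{S,k}) over (x,y,t,p) where: x_{S,k} is an integer with x_{S,k} ∈ {1,...,L} and r_k ≤ x_{S,k} ≤ r_k + Δ for all S ∈ I, k ∈ S; y_{S,k,l} ∈ {0,1}, Σ_{l=1}^L y_{S,k,l} = 1, and Σ_{l=1}^L l·y_{S,k,l} ≥ x_{S,k} for all S ∈ I, k ∈ S; t_{ω,S,l} ≥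 0 with Σ_{S∈I} Σ_{l=1}^L t_{ω,S,l} ≤ T for every ω; p_{ω,S,l} ≥ 0; and n_S·D_l·y_{S,k,l} ≤ (B/T) Σ_{ω∈Ω} q(ω)·t_{ω,S,l}·log₂(1 + p_{ω,S,l}·h_k(ω)/n₀) for all S ∈ I, k ∈ S, l ∈ {1,...,L}. If (x*,y*,t*,p*) is feasible for Problem (w,r) and attains the infimum of F over the feasible set of Problem (w,r), then x*_{S,k} = min{ r_k + Δ, Σ_{l=1}^L l·y*_{S,k,l} } for every S ∈ I and k ∈ S. -/

import Mathlib

/-- Theorem 2, optimality property of Problem (w,r): at any optimal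
solution of the weighted-sum energy minimization with user transcoding under the
relative smoothness requirement, the playback quality levels satisfy
`x*_{S,k} = min{r_k + Δ, Σ_l l·y*_{S,k,l}}`. -/
theorem stmt10 (K L : ℕ) (hK : 0 < K) (hL : 0 < L)
    (I : Finset (Finset (Fin K))) (hI : I.Nonempty) (hIne : ∀ S ∈ I, S.Nonempty)
    (n : Finset (Fin K) → ℕ) (hn : ∀ S ∈ I, 0 < n S)
    (D : ℕ → ℝ) (hD1 : 0 < D 1)
    (hD : ∀ l m : ℕ, 1 ≤ l → l < m → m ≤ L → D l < D m)
    (r : Fin K → ℕ) (hr : ∀ k, r k ∈ Finset.Icc 1 L) (Δ : ℕ)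
    (B T n₀ : ℝ) (hB : 0 < B) (hT : 0 < T) (hn₀ : 0 < n₀)
    (P : Fin K → ℝ) (hP : ∀ k, 0 < P k) (β : ℝ) (hβ : 1 ≤ β)
    (Ω : Type) [Fintype Ω] [Nonempty Ω]
    (q : Ω → ℝ) (hq : ∀ ω, 0 ≤ q ω) (hq1 : ∑ ω, q ω = 1)
    (h : Ω → Fin K → ℝ) (hh : ∀ ω k, 0 < h ω k)
    -- objective of Problem (w,r)
    (F : (Finset (Fin K) → Fin K → ℕ) → (Finset (Fin K) → Fin K → ℕ → ℝ) →
         (Ω → Finset (Fin K) → ℕ → ℝ) → (Ω → Finset (Fin K) → ℕ → ℝ) → ℝ)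
    (hF : ∀ x y t p, F x y t p =
      (∑ ω, q ω * ∑ S ∈ I, ∑ l ∈ Finset.Icc 1 L, t ω S l * p ω S l) +
      β * ∑ S ∈ I, ∑ k ∈ S, (n S : ℝ) * P k * T *
        ((∑ l ∈ Finset.Icc 1 L, (l : ℝ) * y S k l) - (x S k : ℝ)))
    -- feasibility for Problem (w,r)
    (Feas : (Finset (Fin K) → Fin K → ℕ) → (Finset (Fin K) → Fin K → ℕ → ℝ) →
         (Ω → Finset (Fin K) → ℕ → ℝ) → (Ω → Finset (Fin K) → ℕ → ℝ) → Prop)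
    (hFeas : ∀ x y t p, Feas x y t p ↔
      ((∀ S ∈ I, ∀ k ∈ S, x S k ∈ Finset.Icc 1 L ∧ r k ≤ x S k ∧ x S k ≤ r k + Δ) ∧
       (∀ S ∈ I, ∀ k ∈ S, ∀ l ∈ Finset.Icc 1 L, y S k l = 0 ∨ y S k l = 1) ∧
       (∀ S ∈ I, ∀ k ∈ S, ∑ l ∈ Finset.Icc 1 L, y S k l = 1) ∧
       (∀ S ∈ I, ∀ k ∈ S, (x S k : ℝ) ≤ ∑ l ∈ Finset.Icc 1 L, (l : ℝ) * y S k l) ∧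
       (∀ ω S l, 0 ≤ t ω S l) ∧
       (∀ ω, ∑ S ∈ I, ∑ l ∈ Finset.Icc 1 L, t ω S l ≤ T) ∧
       (∀ ω S l, 0 ≤ p ω S l) ∧
       (∀ S ∈ I, ∀ k ∈ S, ∀ l ∈ Finset.Icc 1 L, (n S : ℝ) * D l * y S k l ≤
         (B / T) * ∑ ω, q ω * (t ω S l *
           Real.logb 2 (1 + p ω S l * h ω k / n₀)))))
    -- (x*, y*, t*, p*) is an optimal solution of Problem (w,r)
    (xs : Finset (Fin K) → Fin K → ℕ) (ys : Finset (Fin K) → Fin K → ℕ → ℝ)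
    (ts ps : Ω → Finset (Fin K) → ℕ → ℝ)
    (hfeas : Feas xs ys ts ps)
    (hopt : ∀ x y t p, Feas x y t p → F xs ys ts ps ≤ F x y t p) :
    ∀ S ∈ I, ∀ k ∈ S, (xs S k : ℝ) =
      min ((r k + Δ : ℕ) : ℝ) (∑ l ∈ Finset.Icc 1 L, (l : ℝ) * ys S k l) := by
  intro S hS k hk
  rw [hFeas] at hfeas
  obtain ⟨h1, h2, h3, h4, h5, h6, h7, h8⟩ := hfeas
  have hx1 := h1 S hS k hk
  have hxle : (xs S k : ℝ) ≤ min ((r k + Δ : ℕ) : ℝ)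
      (∑ l ∈ Finset.Icc 1 L, (l : ℝ) * ys S k l) :=
    le_min (by exact_mod_cast hx1.2.2) (h4 S hS k hk)
  by_contra hne
  have hlt : (xs S k : ℝ) < min ((r k + Δ : ℕ) : ℝ)
      (∑ l ∈ Finset.Icc 1 L, (l : ℝ) * ys S k l) := lt_of_le_of_ne hxle hne
  obtain ⟨N, hN⟩ : ∃ N : ℕ, (N : ℝ) = ∑ l ∈ Finset.Icc 1 L, (l : ℝ) * ys S k l := by
    refine ⟨∑ l ∈ Finset.Icc 1 L, if ys S k l = 1 then l else 0, ?_⟩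
    push_cast
    refine Finset.sum_congr rfl fun l hl => ?_
    rcases h2 S hS k hk l hl with h0 | h0 <;> simp [h0]
  have hSigL : (∑ l ∈ Finset.Icc 1 L, (l : ℝ) * ys S k l) ≤ (L : ℝ) := by
    calc (∑ l ∈ Finset.Icc 1 L, (l : ℝ) * ys S k l)
        ≤ ∑ l ∈ Finset.Icc 1 L, (L : ℝ) * ys S k l := by
          refine Finset.sum_le_sum fun l hl => ?_
          have hy : 0 ≤ ys S k l := by
            rcases h2 S hS k hk l hl with h0 | h0 <;> simp [h0]
          have hlL : (l : ℝ) ≤ (L : ℝ) := by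
            exact_mod_cast (Finset.mem_Icc.mp hl).2
          exact mul_le_mul_of_nonneg_right hlL hy
      _ = (L : ℝ) := by rw [← Finset.mul_sum, h3 S hS k hk, mul_one]
  have hxN : xs S k < N := by
    have : (xs S k : ℝ) < (N : ℝ) := by
      rw [hN]; exact lt_of_lt_of_le hlt (min_le_right _ _)
    exact_mod_cast this
  have hxrΔ : xs S k < r k + Δ := by
    have : (xs S k : ℝ) < ((r k + Δ : ℕ) : ℝ) := lt_of_lt_of_le hlt (min_le_left _ _)
    exact_mod_cast this
  have hsuccSig : ((xs S k + 1 : ℕ) : ℝ) ≤ ∑ l ∈ Finset.Icc 1 L, (l : ℝ) * ys S k l := by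
    rw [← hN]; exact_mod_cast hxN
  have hsuccL : xs S k + 1 ≤ L := by
    have : ((xs S k + 1 : ℕ) : ℝ) ≤ (L : ℝ) := le_trans hsuccSig hSigL
    exact_mod_cast this
  set x' : Finset (Fin K) → Fin K → ℕ :=
    fun S' k' => if S' = S ∧ k' = k then xs S k + 1 else xs S' k' with hx'
  have hfeas' : Feas x' ys ts ps := by
    rw [hFeas]
    refine ⟨?_, h2, h3, ?_, h5, h6, h7, h8⟩
    · intro S' hS' k' hk'
      by_cases hc : S' = S ∧ k' = k
      · obtain ⟨rfl, rfl⟩ := hc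
        simp only [hx', if_pos (⟨rfl, rfl⟩ : S' = S' ∧ k' = k')]
        refine ⟨Finset.mem_Icc.mpr ⟨by omega, hsuccL⟩, by omega, hxrΔ⟩
      · simp only [hx', if_neg hc]
        exact h1 S' hS' k' hk'
    · intro S' hS' k' hk'
      by_cases hc : S' = S ∧ k' = k
      · obtain ⟨rfl, rfl⟩ := hc
        simp only [hx', if_pos (⟨rfl, rfl⟩ : S' = S' ∧ k' = k')]
        exact hsuccSig
      · simp only [hx', if_neg hc]
        exact h4 S' hS' k' hk'
  have hle := hopt x' ys ts ps hfeas'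
  rw [hF, hF] at hle
  have hcpos : 0 < (n S : ℝ) * P k * T := by
    have hn' : (0 : ℝ) < (n S : ℝ) := by exact_mod_cast hn S hS
    exact mul_pos (mul_pos hn' (hP k)) hT
  have e1 : ∀ S' ∈ I, ∀ k' ∈ S',
      (n S' : ℝ) * P k' * T *
        ((∑ l ∈ Finset.Icc 1 L, (l : ℝ) * ys S' k' l) - (x' S' k' : ℝ))
      = (n S' : ℝ) * P k' * T *
        ((∑ l ∈ Finset.Icc 1 L, (l : ℝ) * ys S' k' l) - (xs S' k' : ℝ))
        - (if S' = S ∧ k' = k then (n S : ℝ) * P k * T else 0) := by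
    intro S' hS' k' hk'
    by_cases hc : S' = S ∧ k' = k
    · obtain ⟨rfl, rfl⟩ := hc
      simp only [hx', if_pos (⟨rfl, rfl⟩ : S' = S' ∧ k' = k'), and_self, if_true]
      push_cast; ring
    · simp only [hx', if_neg hc]; ring
  have e2 : ∑ S' ∈ I, ∑ k' ∈ S',
      (if S' = S ∧ k' = k then (n S : ℝ) * P k * T else 0) = (n S : ℝ) * P k * T := by
    rw [Finset.sum_eq_single S]
    · rw [Finset.sum_eq_single k]
      · simp
      · intro b _ hbk; simp [hbk]
      · intro hks; exact absurd hk hks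
    · intro b _ hbS
      exact Finset.sum_eq_zero fun k' _ => by simp [hbS]
    · intro hSI; exact absurd hS hSI
  have hdiff : ∑ S' ∈ I, ∑ k' ∈ S', (n S' : ℝ) * P k' * T *
        ((∑ l ∈ Finset.Icc 1 L, (l : ℝ) * ys S' k' l) - (x' S' k' : ℝ))
      = (∑ S' ∈ I, ∑ k' ∈ S', (n S' : ℝ) * P k' * T *
        ((∑ l ∈ Finset.Icc 1 L, (l : ℝ) * ys S' k' l) - (xs S' k' : ℝ)))
        - (n S : ℝ) * P k * T := by
    rw [Finset.sum_congr rfl fun S' hS' =>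
      Finset.sum_congr rfl fun k' hk' => e1 S' hS' k' hk']
    rw [Finset.sum_congr rfl fun S' (hS' : S' ∈ I) => Finset.sum_sub_distrib _ _,
      Finset.sum_sub_distrib, e2]
  rw [hdiff] at hle
  have hβpos : (0 : ℝ) < β := lt_of_lt_of_le one_pos hβ
  nlinarith [mul_pos hβpos hcpos]
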